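/- The following are equivalent: (c₂) 𝒩₂ := ⋃_{t∈T} co cone(𝒰_t ∪ {(0_{X*},1)}) is a closed and convex subset of X*×ℝ (weak*-topology on X* times the usual topology on ℝ); (d₂) for every c ∈ X* with inf(RLIP_c) > −∞ there exist t̄ ∈ T and λ̄ ∈ ℝ₊^{(𝒰)} such that c = −∑_{u∈supp λ̄} λ̄_u u_{t̄}¹ and −∑_{u∈supp λ̄} λ̄_u u_{t̄}² = inf(RLIP_c) (stable robust strong duality for the pair (RLIP_c)–(RLID²_c)). -/

import Mathlib

set_option linter.unusedSectionVars false
set_option maxHeartbeats 1000000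


open Pointwise

variable {X : Type*} [AddCommGroup X] [Module ℝ X] [TopologicalSpace X]
  [IsTopologicalAddGroup X] [ContinuousSMul ℝ X] [LocallyConvexSpace ℝ X] [T2Space X]
  {T : Type*}

/-- The cone generated by a set `A`: `cone A = {λa : λ ≥ 0, a ∈ A}`. -/
def coneSet {E : Type*} [SMul ℝ E] (A : Set E) : Set E :=
  {p | ∃ l : ℝ, 0 ≤ l ∧ ∃ a ∈ A, p = l • a}

/-- The optimal value of the robust primal problem (RLIP_c). -/
noncomputable def infRLIP (U : T → Set (WeakDual ℝ X × ℝ)) (c : WeakDual ℝ X) : EReal :=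
  ⨅ x : {x : X | ∀ t, ∀ v ∈ U t, v.1 x ≤ v.2}, ((c x.1 : ℝ) : EReal)

section ConeHelpers

variable {E : Type*} [AddCommGroup E] [Module ℝ E] {A : Set E}

theorem coneSet_zero_mem (hA : A.Nonempty) : (0 : E) ∈ coneSet A := by
  obtain ⟨a, ha⟩ := hA
  exact ⟨0, le_rfl, a, ha, (zero_smul ℝ a).symm⟩

theorem coneSet_smul_mem {l : ℝ} (hl : 0 ≤ l) {p : E} (hp : p ∈ coneSet A) :
    l • p ∈ coneSet A := by
  obtain ⟨l', hl', a, ha, rfl⟩ := hp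
  exact ⟨l * l', mul_nonneg hl hl', a, ha, (smul_smul l l' a).symm ▸ rfl⟩

theorem hull_smul_mem {l : ℝ} (hl : 0 ≤ l) {p : E} (hp : p ∈ convexHull ℝ (coneSet A)) :
    l • p ∈ convexHull ℝ (coneSet A) := by
  have h1 : l • p ∈ l • convexHull ℝ (coneSet A) := Set.smul_mem_smul_set hp
  rw [← convexHull_smul] at h1
  refine convexHull_mono ?_ h1
  rintro q ⟨q', hq', rfl⟩
  exact coneSet_smul_mem hl hq'

theorem hull_add_mem {p q : E} (hp : p ∈ convexHull ℝ (coneSet A))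
    (hq : q ∈ convexHull ℝ (coneSet A)) : p + q ∈ convexHull ℝ (coneSet A) := by
  have hmid : (1/2 : ℝ) • p + (1/2 : ℝ) • q ∈ convexHull ℝ (coneSet A) :=
    (convex_convexHull ℝ _) hp hq (by norm_num) (by norm_num) (by norm_num)
  have := hull_smul_mem (by norm_num : (0:ℝ) ≤ 2) hmid
  rwa [smul_add, smul_smul, smul_smul, show (2:ℝ) * (1/2) = 1 by norm_num, one_smul,
    one_smul] at this

theorem hull_sum_mem {ι : Type*} (s : Finset ι) (γ : ι → ℝ) (a : ι → E) (hA : A.Nonempty)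
    (hγ : ∀ i ∈ s, 0 ≤ γ i) (ha : ∀ i ∈ s, a i ∈ A) :
    ∑ i ∈ s, γ i • a i ∈ convexHull ℝ (coneSet A) := by
  classical
  induction s using Finset.induction_on with
  | empty => simpa using subset_convexHull ℝ _ (coneSet_zero_mem hA)
  | insert _ _ hns ih =>
    rw [Finset.sum_insert hns]
    refine hull_add_mem (subset_convexHull ℝ _ ?_) (ih (fun i hi => hγ i (by simp [hi]))
      (fun i hi => ha i (by simp [hi])))
    exact ⟨γ _, hγ _ (by simp), a _, ha _ (by simp), rfl⟩

theorem hull_elim {p : E} (hA : A.Nonempty) (hp : p ∈ convexHull ℝ (coneSet A)) :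
    ∃ (ι : Type) (s : Finset ι) (γ : ι → ℝ) (a : ι → E),
      (∀ i ∈ s, 0 ≤ γ i) ∧ (∀ i ∈ s, a i ∈ A) ∧ p = ∑ i ∈ s, γ i • a i := by
  rw [convexHull_eq] at hp
  obtain ⟨ι, t, w, z, hw0, hw1, hz, hcm⟩ := hp
  classical
  have hz' : ∀ i, ∃ l : ℝ, ∃ a' : E, 0 ≤ l ∧ a' ∈ A ∧ (i ∈ t → z i = l • a') := by
    intro i
    by_cases hi : i ∈ t
    · obtain ⟨l, hl, a', ha', hz'⟩ := hz i hi
      exact ⟨l, a', hl, ha', fun _ => hz'⟩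
    · exact ⟨0, hA.choose, le_rfl, hA.choose_spec, fun h => absurd h hi⟩
  choose l a' hl ha' hza using hz'
  refine ⟨ι, t, fun i => w i * l i, a', fun i hi => mul_nonneg (hw0 i hi) (hl i),
    fun i _ => ha' i, ?_⟩
  rw [← hcm, Finset.centerMass_eq_of_sum_1 _ _ hw1]
  refine Finset.sum_congr rfl fun i hi => ?_
  rw [hza i hi, smul_smul]

end ConeHelpers

/-- Evaluation at a point, as a linear functional on the weak-* dual. -/
noncomputable def evalWD (x : X) : WeakDual ℝ X →ₗ[ℝ] ℝ := (topDualPairing ℝ X).flip x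

theorem evalWD_apply (x : X) (φ : WeakDual ℝ X) : evalWD x φ = φ x := rfl

theorem continuous_evalWD (x : X) : Continuous fun φ : WeakDual ℝ X => φ x :=
  WeakBilin.eval_continuous (topDualPairing ℝ X) x

/-- Every continuous linear functional on the weak-* dual is an evaluation. -/
theorem weakDual_dual_eval (f : WeakDual ℝ X →L[ℝ] ℝ) :
    ∃ x : X, ∀ φ : WeakDual ℝ X, f φ = φ x := by
  classical
  have : Nonempty X := ⟨0⟩
  set B := topDualPairing ℝ X
  have hws : WithSeminorms (LinearMap.toSeminormFamily B : X → Seminorm ℝ (WeakDual ℝ X)) :=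
    LinearMap.weakBilin_withSeminorms B
  set q : Seminorm ℝ (WeakDual ℝ X) := LinearMap.toSeminorm (f : WeakDual ℝ X →ₗ[ℝ] ℝ)
  have hq : Continuous q := by
    have : Continuous fun φ : WeakDual ℝ X => ‖f φ‖ := f.continuous.norm
    exact this
  obtain ⟨s, C, hC0, hC⟩ := Seminorm.bound_of_continuous hws q hq
  have hker : ⨅ i : s, LinearMap.ker (evalWD (i : X)) ≤
      LinearMap.ker (f : WeakDual ℝ X →ₗ[ℝ] ℝ) := by
    intro φ hφ
    rw [Submodule.mem_iInf] at hφ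
    have hsup : (s.sup (LinearMap.toSeminormFamily B)) φ = 0 := by
      refine le_antisymm (Seminorm.finset_sup_apply_le le_rfl fun i hi => ?_) (apply_nonneg _ _)
      have h0 : φ i = 0 := hφ ⟨i, hi⟩
      show ‖B φ i‖ ≤ 0
      rw [show B φ i = φ i from rfl, h0]
      simp
    have hq0 : q φ ≤ 0 := by
      have h2 : q φ ≤ C • (s.sup (LinearMap.toSeminormFamily B)) φ := hC φ
      rw [hsup] at h2
      simpa using h2
    have : ‖f φ‖ ≤ 0 := hq0
    have : f φ = 0 := by simpa [norm_le_zero_iff] using this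
    exact this
  have hspan : (f : WeakDual ℝ X →ₗ[ℝ] ℝ) ∈
      Submodule.span ℝ (Set.range fun i : s => evalWD (i : X)) :=
    mem_span_of_iInf_ker_le_ker hker
  obtain ⟨c, hc⟩ := (Submodule.mem_span_range_iff_exists_fun ℝ).1 hspan
  refine ⟨∑ i : s, c i • (i : X), fun φ => ?_⟩
  have := congrFun (congrArg (fun g : WeakDual ℝ X →ₗ[ℝ] ℝ => (g : WeakDual ℝ X → ℝ)) hc) φ
  simp only [LinearMap.coe_sum, Finset.sum_apply, LinearMap.smul_apply] at this
  show (f : WeakDual ℝ X →ₗ[ℝ] ℝ) φ = φ (∑ i : s, c i • (i : X))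
  rw [← this, map_sum]
  refine Finset.sum_congr rfl fun i _ => ?_
  rw [map_smul, evalWD_apply, smul_eq_mul]

/-- Theorem 4.1, case i = 2: the robust moment cone
𝒩₂ = ⋃_{t∈T} co cone(𝒰_t ∪ {(0,1)}) is closed and convex iff stable robust strong
duality holds for the pair (RLIP_c)-(RLID²_c). -/
theorem stmt12 [Nonempty T] (U : T → Set (WeakDual ℝ X × ℝ)) (hU : ∀ t, (U t).Nonempty)
    (hF : {x : X | ∀ t, ∀ v ∈ U t, v.1 x ≤ v.2}.Nonempty) :
    (IsClosed (⋃ t, convexHull ℝ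
        (coneSet (U t ∪ {((0 : WeakDual ℝ X), (1 : ℝ))}))) ∧
      Convex ℝ (⋃ t, convexHull ℝ
        (coneSet (U t ∪ {((0 : WeakDual ℝ X), (1 : ℝ))})))) ↔
    (∀ c : WeakDual ℝ X, ⊥ < infRLIP U c →
      ∃ t : T, ∃ μ : {u : T → WeakDual ℝ X × ℝ // ∀ s, u s ∈ U s} →₀ ℝ,
        (∀ u, 0 ≤ μ u) ∧ c = -(μ.sum fun u a => a • (u.1 t).1) ∧
        ((-(μ.sum fun u a => a * (u.1 t).2) : ℝ) : EReal) = infRLIP U c) := by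
  classical
  set F := {x : X | ∀ t, ∀ v ∈ U t, v.1 x ≤ v.2} with hFdef
  set N := ⋃ t, convexHull ℝ (coneSet (U t ∪ {((0 : WeakDual ℝ X), (1 : ℝ))})) with hNdef
  have hAne : ∀ t : T, (U t ∪ {((0 : WeakDual ℝ X), (1 : ℝ))}).Nonempty :=
    fun t => ⟨((0 : WeakDual ℝ X), (1 : ℝ)), Or.inr rfl⟩
  -- weak duality : every element of the moment cone gives a valid inequality on F
  have hNsubK : ∀ (t : T) (p : WeakDual ℝ X × ℝ),
      p ∈ convexHull ℝ (coneSet (U t ∪ {((0 : WeakDual ℝ X), (1 : ℝ))})) →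
      ∀ x ∈ F, p.1 x ≤ p.2 := by
    intro t p hp x hx
    obtain ⟨ι, sfin, γ, a, hγ, ha, rfl⟩ := hull_elim (hAne t) hp
    have h1 : (∑ i ∈ sfin, γ i • a i).1 = ∑ i ∈ sfin, γ i • (a i).1 := by
      rw [Prod.fst_sum]
      exact Finset.sum_congr rfl fun i _ => rfl
    have h2 : (∑ i ∈ sfin, γ i • a i).2 = ∑ i ∈ sfin, γ i * (a i).2 := by
      rw [Prod.snd_sum]
      exact Finset.sum_congr rfl fun i _ => rfl
    rw [h1, h2]
    have h3 : evalWD x (∑ i ∈ sfin, γ i • (a i).1) = ∑ i ∈ sfin, γ i * ((a i).1 x) := by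
      rw [map_sum]
      exact Finset.sum_congr rfl fun i _ => by rw [map_smul, smul_eq_mul, evalWD_apply]
    show evalWD x (∑ i ∈ sfin, γ i • (a i).1) ≤ _
    rw [h3]
    refine Finset.sum_le_sum fun i hi => ?_
    refine mul_le_mul_of_nonneg_left ?_ (hγ i hi)
    rcases ha i hi with h | h
    · exact hx t _ h
    · simp only [Set.mem_singleton_iff] at h
      rw [h]
      show (0 : WeakDual ℝ X) x ≤ 1
      have hz : (0 : WeakDual ℝ X) x = 0 := rfl
      rw [hz]
      norm_num
  have hinf_ge : ∀ (c : WeakDual ℝ X) (r : ℝ), (∀ x ∈ F, r ≤ c x) →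
      (r : EReal) ≤ infRLIP U c := by
    intro c r h
    unfold infRLIP
    exact le_iInf fun x => EReal.coe_le_coe_iff.2 (h x.1 x.2)
  have hmle : ∀ (c : WeakDual ℝ X) (x : X), x ∈ F → infRLIP U c ≤ ((c x : ℝ) : EReal) := by
    intro c x hx
    exact iInf_le (fun y : {x : X | ∀ t, ∀ v ∈ U t, v.1 x ≤ v.2} =>
      ((c y.1 : ℝ) : EReal)) ⟨x, hx⟩
  haveI : LocallyConvexSpace ℝ (WeakDual ℝ X) := WeakBilin.locallyConvexSpace
  constructor
  · rintro ⟨hNcl, hNcv⟩ c hbot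
    obtain ⟨xf, hxf⟩ := hF
    have hmtop : infRLIP U c ≠ ⊤ :=
      ((hmle c xf hxf).trans_lt (EReal.coe_lt_top _)).ne
    set m : ℝ := (infRLIP U c).toReal with hmdef
    have hm : infRLIP U c = (m : EReal) := (EReal.coe_toReal hmtop hbot.ne').symm
    obtain ⟨t0⟩ := ‹Nonempty T›
    -- the key point : (-c, -m) belongs to the moment cone
    have hmem : ((-c : WeakDual ℝ X), -m) ∈ N := by
      by_contra hnot
      obtain ⟨f, u, hfa, hfx⟩ := geometric_hahn_banach_closed_point hNcv hNcl hnot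
      have h0N : (0 : WeakDual ℝ X × ℝ) ∈ N :=
        Set.mem_iUnion.2 ⟨t0, subset_convexHull ℝ _ (coneSet_zero_mem (hAne t0))⟩
      have hu0 : 0 < u := by have := hfa 0 h0N; simpa using this
      have hle : ∀ p ∈ N, f p ≤ 0 := by
        intro p hp
        by_contra h
        push_neg at h
        obtain ⟨t, ht⟩ := Set.mem_iUnion.1 hp
        have hmem2 : ((u + 1) / f p) • p ∈ N :=
          Set.mem_iUnion.2 ⟨t, hull_smul_mem (by positivity) ht⟩
        have h4 := hfa _ hmem2
        rw [map_smul, smul_eq_mul, div_mul_cancel₀ _ h.ne'] at h4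
        linarith
      obtain ⟨x₀, hx₀⟩ := weakDual_dual_eval (f.comp (ContinuousLinearMap.inl ℝ (WeakDual ℝ X) ℝ))
      set s₀ : ℝ := f ((0 : WeakDual ℝ X), (1 : ℝ)) with hs₀def
      have hf_eq : ∀ (φ : WeakDual ℝ X) (r : ℝ), f (φ, r) = φ x₀ + r * s₀ := by
        intro φ r
        have h1 : (φ, r) = ((φ, (0 : ℝ)) + ((0 : WeakDual ℝ X), r)) := by simp
        have h2 : ((0 : WeakDual ℝ X), r) = r • ((0 : WeakDual ℝ X), (1 : ℝ)) := by simp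
        rw [h1, map_add, h2, map_smul, smul_eq_mul]
        have h3 : f (φ, (0 : ℝ)) = φ x₀ := hx₀ φ
        rw [h3]
      have h01 : ((0 : WeakDual ℝ X), (1 : ℝ)) ∈ N :=
        Set.mem_iUnion.2 ⟨t0, subset_convexHull ℝ _
          ⟨1, zero_le_one, _, Or.inr rfl, (one_smul ℝ _).symm⟩⟩
      have hs0 : s₀ ≤ 0 := hle _ h01
      have hUineq : ∀ t, ∀ v ∈ U t, v.1 x₀ + v.2 * s₀ ≤ 0 := by
        intro t v hv
        have hvN : v ∈ N := Set.mem_iUnion.2 ⟨t, subset_convexHull ℝ _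
          ⟨1, zero_le_one, v, Or.inl hv, (one_smul ℝ v).symm⟩⟩
        have := hle v hvN
        rwa [show v = (v.1, v.2) from rfl, hf_eq] at this
      have hpos : 0 < -(c x₀) + -m * s₀ := by
        have h5 := hfx
        rw [hf_eq] at h5
        have h6 : (-c : WeakDual ℝ X) x₀ = -(c x₀) := rfl
        rw [h6] at h5
        linarith
      have hmxf : m ≤ c xf := by
        have := hmle c xf hxf
        rw [hm] at this
        exact EReal.coe_le_coe_iff.1 this
      rcases eq_or_lt_of_le hs0 with hs0' | hs0'
      · -- s₀ = 0 : the primal is unbounded below, contradiction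
        have hcx0 : c x₀ < 0 := by rw [hs0'] at hpos; linarith
        have hxineq : ∀ t, ∀ v ∈ U t, v.1 x₀ ≤ 0 := by
          intro t v hv
          have := hUineq t v hv
          rw [hs0'] at this
          linarith
        set lam := (m - c xf - 1) / c x₀ with hlamdef
        have hlam : 0 ≤ lam :=
          le_of_lt (div_pos_of_neg_of_neg (by linarith) hcx0)
        have hfeas : xf + lam • x₀ ∈ F := by
          intro t v hv
          have h7 : v.1 (xf + lam • x₀) = v.1 xf + lam * v.1 x₀ := by
            rw [map_add, map_smul, smul_eq_mul]
          rw [h7]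
          have := mul_nonpos_of_nonneg_of_nonpos hlam (hxineq t v hv)
          have := hxf t v hv
          linarith
        have h8 := hmle c _ hfeas
        rw [hm] at h8
        have h9 : c (xf + lam • x₀) = m - 1 := by
          rw [map_add, map_smul, smul_eq_mul, hlamdef, div_mul_cancel₀ _ hcx0.ne]
          ring
        rw [h9] at h8
        have := EReal.coe_le_coe_iff.1 h8
        linarith
      · -- s₀ < 0 : rescale to get a feasible point with value < m
        have hs0ne : -s₀ ≠ 0 := by linarith
        have hs0ne' : s₀ ≠ 0 := by linarith
        have hs0pos : 0 < -s₀ := by linarith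
        set y := (-s₀)⁻¹ • x₀ with hydef
        have hy : y ∈ F := by
          intro t v hv
          have h10 := hUineq t v hv
          have h11 : v.1 y = (-s₀)⁻¹ * v.1 x₀ := by rw [hydef, map_smul, smul_eq_mul]
          rw [h11]
          have h12 : v.1 x₀ ≤ v.2 * (-s₀) := by linarith
          calc (-s₀)⁻¹ * v.1 x₀ ≤ (-s₀)⁻¹ * (v.2 * (-s₀)) := by
                exact mul_le_mul_of_nonneg_left h12 (by positivity)
            _ = v.2 := by field_simp [hs0ne']
        have hcy : c y < m := by
          have h13 : c y = (-s₀)⁻¹ * c x₀ := by rw [hydef, map_smul, smul_eq_mul]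
          have h14 : c x₀ < m * (-s₀) := by linarith
          rw [h13]
          calc (-s₀)⁻¹ * c x₀ < (-s₀)⁻¹ * (m * (-s₀)) := by
                exact mul_lt_mul_of_pos_left h14 (by positivity)
            _ = m := by field_simp [hs0ne']
        have h15 := hmle c y hy
        rw [hm] at h15
        exact absurd (EReal.coe_le_coe_iff.1 h15) (not_le.2 hcy)
    -- extract the representation
    obtain ⟨t, hpt⟩ := Set.mem_iUnion.1 hmem
    obtain ⟨ι, sfin, γ, a, hγ, ha, hsum⟩ := hull_elim (hAne t) hpt
    set I := sfin.filter (fun i => a i ∈ U t) with hIdef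
    have haI : ∀ i ∈ sfin, i ∉ I → a i = ((0 : WeakDual ℝ X), (1 : ℝ)) := by
      intro i hi hni
      rcases ha i hi with h | h
      · exact absurd (Finset.mem_filter.2 ⟨hi, h⟩) hni
      · simpa using h
    have h1 : -c = ∑ i ∈ I, γ i • (a i).1 := by
      have := congrArg Prod.fst hsum
      rw [Prod.fst_sum] at this
      simp only [Prod.smul_fst] at this
      rw [this]
      refine (Finset.sum_subset (Finset.filter_subset _ _) ?_).symm
      intro i hi hni
      rw [haI i hi hni]
      simp
    have h2 : -m = ∑ i ∈ sfin, γ i * (a i).2 := by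
      have := congrArg Prod.snd hsum
      rw [Prod.snd_sum] at this
      simpa using this
    set S2 := ∑ i ∈ I, γ i * (a i).2 with hS2def
    have hS2le : S2 ≤ -m := by
      rw [h2, ← Finset.sum_filter_add_sum_filter_not sfin (fun i => a i ∈ U t)]
      have hrest : 0 ≤ ∑ i ∈ sfin.filter (fun i => ¬ a i ∈ U t), γ i * (a i).2 := by
        refine Finset.sum_nonneg fun i hi => ?_
        obtain ⟨hi1, hi2⟩ := Finset.mem_filter.1 hi
        refine mul_nonneg (hγ i hi1) ?_
        rcases ha i hi1 with h | h
        · exact absurd h hi2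
        · simp only [Set.mem_singleton_iff] at h; rw [h]; norm_num
      linarith
    have hS2ge : -S2 ≤ m := by
      have h16 : ((-S2 : ℝ) : EReal) ≤ infRLIP U c := by
        refine hinf_ge c (-S2) fun x hx => ?_
        have h17 : c x = -∑ i ∈ I, γ i * ((a i).1 x) := by
          have h18 := congrArg (evalWD x) h1
          rw [map_sum] at h18
          simp only [map_smul, smul_eq_mul] at h18
          have h19 : evalWD x (-c) = -(c x) := by rw [map_neg, evalWD_apply]
          rw [h19] at h18
          have := congrArg Neg.neg h18
          rw [neg_neg] at this
          rw [this]
          rfl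
        rw [h17]
        have h20 : ∑ i ∈ I, γ i * ((a i).1 x) ≤ S2 := by
          refine Finset.sum_le_sum fun i hi => ?_
          obtain ⟨hi1, hi2⟩ := Finset.mem_filter.1 hi
          exact mul_le_mul_of_nonneg_left (hx t _ hi2) (hγ i hi1)
        linarith
      rw [hm] at h16
      exact EReal.coe_le_coe_iff.1 h16
    have hS2 : S2 = -m := le_antisymm hS2le (by linarith)
    -- build the finitely supported family of multipliers
    refine ⟨t, ?_⟩
    set uF : ι → {u : T → WeakDual ℝ X × ℝ // ∀ s, u s ∈ U s} := fun i =>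
      if h : a i ∈ U t then
        ⟨fun s' => if hs : s' = t then a i else (hU s').some, by
          intro s'
          dsimp only
          split_ifs with hs
          · subst hs; exact h
          · exact (hU s').some_mem⟩
      else ⟨fun s' => (hU s').some, fun s' => (hU s').some_mem⟩ with huFdef
    have huF : ∀ i ∈ I, ((uF i).1 t) = a i := by
      intro i hi
      obtain ⟨_, h⟩ := Finset.mem_filter.1 hi
      simp [huFdef, h]
    refine ⟨∑ i ∈ I, Finsupp.single (uF i) (γ i), ?_, ?_, ?_⟩
    · intro v
      rw [Finsupp.finset_sum_apply]
      refine Finset.sum_nonneg fun i hi => ?_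
      rw [Finsupp.single_apply]
      split
      · exact hγ i (Finset.filter_subset _ _ hi)
      · exact le_rfl
    · have e1 : (∑ i ∈ I, Finsupp.single (uF i) (γ i)).sum
          (fun u (a : ℝ) => a • ((u.1 t).1)) = ∑ i ∈ I, γ i • (a i).1 := by
        rw [← Finsupp.sum_finsetSum_index (h := fun (u : {u : T → WeakDual ℝ X × ℝ // ∀ s, u s ∈ U s}) (a : ℝ) => a • ((u.1 t).1)) (fun _ => zero_smul ℝ _) (fun u x y => add_smul x y _)]
        refine Finset.sum_congr rfl fun i hi => ?_
        rw [Finsupp.sum_single_index (h := fun (u : {u : T → WeakDual ℝ X × ℝ // ∀ s, u s ∈ U s}) (a : ℝ) => a • ((u.1 t).1)) (zero_smul ℝ _), huF i hi]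
      rw [e1, ← h1, neg_neg]
    · have e2 : (∑ i ∈ I, Finsupp.single (uF i) (γ i)).sum
          (fun u (a : ℝ) => a * ((u.1 t).2)) = ∑ i ∈ I, γ i * (a i).2 := by
        rw [← Finsupp.sum_finsetSum_index (h := fun (u : {u : T → WeakDual ℝ X × ℝ // ∀ s, u s ∈ U s}) (a : ℝ) => a * ((u.1 t).2)) (fun _ => zero_mul _) (fun u x y => add_mul x y _)]
        refine Finset.sum_congr rfl fun i hi => ?_
        rw [Finsupp.sum_single_index (h := fun (u : {u : T → WeakDual ℝ X × ℝ // ∀ s, u s ∈ U s}) (a : ℝ) => a * ((u.1 t).2)) (zero_mul _), huF i hi]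
      rw [e2, ← hS2def, hS2, neg_neg, hm]
  · -- converse : strong duality implies the moment cone is closed and convex
    intro hd
    have hNK : N = {p : WeakDual ℝ X × ℝ | ∀ x ∈ F, p.1 x ≤ p.2} := by
      apply Set.Subset.antisymm
      · intro p hp
        obtain ⟨t, hpt⟩ := Set.mem_iUnion.1 hp
        exact fun x hx => hNsubK t p hpt x hx
      · rintro ⟨φ, r⟩ hp
        set c : WeakDual ℝ X := -φ with hcdef
        have hcx : ∀ x : X, c x = -(φ x) := fun x => rfl
        have hge : ((-r : ℝ) : EReal) ≤ infRLIP U c := by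
          refine hinf_ge c (-r) fun x hx => ?_
          rw [hcx]
          have := hp x hx
          simpa using this
        have hbot : ⊥ < infRLIP U c := lt_of_lt_of_le (EReal.bot_lt_coe _) hge
        obtain ⟨t, μ, hμ0, hc, hm2⟩ := hd c hbot
        set S2 : ℝ := μ.sum fun u a => a * (u.1 t).2 with hS2def
        have hφ : φ = μ.sum fun u a => a • (u.1 t).1 := by
          have h23 : -φ = -(μ.sum fun u a => a • (u.1 t).1) := hc
          exact neg_injective h23
        have hS2r : S2 ≤ r := by
          have h24 : ((-r : ℝ) : EReal) ≤ ((-S2 : ℝ) : EReal) := by rw [hm2]; exact hge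
          have := EReal.coe_le_coe_iff.1 h24
          linarith
        refine Set.mem_iUnion.2 ⟨t, ?_⟩
        have hrepr : ((φ, r) : WeakDual ℝ X × ℝ) =
            (∑ v ∈ μ.support, μ v • ((v.1 t))) +
              (r - S2) • (((0 : WeakDual ℝ X), (1 : ℝ))) := by
          have hfst : (∑ v ∈ μ.support, μ v • (v.1 t)).1 = μ.sum fun u a => a • (u.1 t).1 := by
            rw [Prod.fst_sum]
            rfl
          have hsnd : (∑ v ∈ μ.support, μ v • (v.1 t)).2 = S2 := by
            rw [Prod.snd_sum]
            rfl
          refine Prod.ext ?_ ?_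
          · simp only [Prod.fst_add, Prod.smul_fst, hfst]
            rw [← hφ]
            simp
          · simp only [Prod.snd_add, Prod.smul_snd, hsnd]
            simp only [smul_eq_mul, mul_one]
            ring
        rw [hrepr]
        refine hull_add_mem ?_ (subset_convexHull ℝ _ ⟨r - S2, by linarith, _, Or.inr rfl, rfl⟩)
        exact hull_sum_mem μ.support (fun v => μ v) (fun v => v.1 t) (hAne t)
          (fun v _ => hμ0 v) (fun v _ => Or.inl (v.2 t))
    have hKrw : {p : WeakDual ℝ X × ℝ | ∀ x ∈ F, p.1 x ≤ p.2} =
        ⋂ x ∈ F, {p : WeakDual ℝ X × ℝ | p.1 x ≤ p.2} := by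
      ext p
      simp [Set.mem_iInter]
    constructor
    · rw [hNK, hKrw]
      exact isClosed_biInter fun x _ =>
        isClosed_le ((continuous_evalWD x).comp continuous_fst) continuous_snd
    · rw [hNK]
      intro p hp q hq α β hα hβ hαβ x hx
      have h25 := hp x hx
      have h26 := hq x hx
      have h27 : (α • p + β • q).1 x = α * (p.1 x) + β * (q.1 x) := by
        show evalWD x (α • p + β • q).1 = _
        simp only [Prod.fst_add, Prod.smul_fst, map_add, map_smul, smul_eq_mul, evalWD_apply]
      have h28 : (α • p + β • q).2 = α * p.2 + β * q.2 := rfl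
      rw [h27, h28]
      have := mul_le_mul_of_nonneg_left h25 hα
      have := mul_le_mul_of_nonneg_left h26 hβ
      linarith
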